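/- For every n ≥ 0 the polynomial identity Σ_{j=0}^{n} φ(j)·e_{n−j}(v) = 2^n · n! · Σ_{j=0}^{n} binom(2j, j)·4^{−j}·v^{n−j} holds in ℝ[v]. -/

import Mathlib

open Polynomial

def phiAux : ℕ → ℕ
  | 0 => 1
  | n+1 => (2*n+1) * phiAux n

lemma phiAux_spec (n : ℕ) : (2*n).factorial = phiAux n * (2^n * n.factorial) := by
  induction n with
  | zero => simp [phiAux]
  | succ n ih =>
    have h : 2 * (n+1) = (2*n) + 1 + 1 := by ring
    rw [h, Nat.factorial_succ, Nat.factorial_succ, ih, phiAux, Nat.factorial_succ, pow_succ]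
    ring


/-- `φ(n) = (2n−1)!! = (2n)!/(2^n·n!)` (the division is exact). -/
def phi (n : ℕ) : ℕ := (2 * n).factorial / (2 ^ n * n.factorial)

lemma phi_eq (n : ℕ) : phi n = phiAux n := by
  unfold phi
  rw [phiAux_spec]
  exact Nat.mul_div_cancel _ (Nat.mul_pos (Nat.pow_pos (by norm_num)) n.factorial_pos)

lemma phi_zero : phi 0 = 1 := by rw [phi_eq]; rfl
lemma phi_succ (n : ℕ) : phi (n+1) = (2*n+1) * phi n := by rw [phi_eq, phi_eq]; rfl

lemma conv_assoc {R : Type*} [CommSemiring R] (a b c : ℕ → R) (n : ℕ) :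
    (∑ j ∈ Finset.range (n+1), a j * ∑ i ∈ Finset.range (n - j + 1), b i * c (n - j - i))
  = ∑ k ∈ Finset.range (n+1), (∑ j ∈ Finset.range (k+1), a j * b (k - j)) * c (n - k) := by
  have h := congrArg (PowerSeries.coeff (R := R) n)
    (mul_assoc (PowerSeries.mk a) (PowerSeries.mk b) (PowerSeries.mk c))
  rw [PowerSeries.coeff_mul, PowerSeries.coeff_mul,
    Finset.Nat.sum_antidiagonal_eq_sum_range_succ_mk,
    Finset.Nat.sum_antidiagonal_eq_sum_range_succ_mk] at h
  simpa [PowerSeries.coeff_mul, Finset.Nat.sum_antidiagonal_eq_sum_range_succ_mk] using h.symm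

lemma conv_phi_m (m : ℕ → ℕ) (hm0 : m 0 = 1)
    (hm : ∀ n : ℕ, m (n + 1) =
      (∑ k ∈ Finset.range (n + 1), m k * m (n - k)) + (2 * (n + 1) - 1) * m n) :
    ∀ r : ℕ, ∑ j ∈ Finset.range (r+1), phi j * m (r - j) = phi (r+1) := by
  intro r
  induction r using Nat.strong_induction_on with
  | _ r ih =>
  match r with
  | 0 => simp [phi_zero, phi_succ, hm0]
  | s+1 =>
    rw [Finset.sum_range_succ, Nat.sub_self, hm0, mul_one]
    have hsum : ∀ j ∈ Finset.range (s+1), phi j * m (s+1-j)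
        = phi j * (∑ k ∈ Finset.range (s-j+1), m k * m (s-j-k))
          + (2*(s-j)+1) * (phi j * m (s-j)) := by
      intro j hj
      have hj' : j ≤ s := Nat.lt_succ_iff.mp (Finset.mem_range.mp hj)
      have h1 : s + 1 - j = (s - j) + 1 := by omega
      have h2 : 2 * (s - j + 1) - 1 = 2*(s-j)+1 := by omega
      rw [h1, hm (s-j), h2]
      ring
    rw [Finset.sum_congr rfl hsum, Finset.sum_add_distrib, conv_assoc]
    have h3 : ∀ k ∈ Finset.range (s+1),
        (∑ j ∈ Finset.range (k+1), phi j * m (k-j)) * m (s-k)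
        = (2*k+1) * (phi k * m (s-k)) := by
      intro k hk
      rw [ih k (Finset.mem_range.mp hk), phi_succ]
      ring
    rw [Finset.sum_congr rfl h3, ← Finset.sum_add_distrib]
    have h4 : ∀ j ∈ Finset.range (s+1),
        (2*j+1) * (phi j * m (s-j)) + (2*(s-j)+1) * (phi j * m (s-j))
        = (2*s+2) * (phi j * m (s-j)) := by
      intro j hj
      have hj' : j ≤ s := Nat.lt_succ_iff.mp (Finset.mem_range.mp hj)
      have h5 : (2*j+1) + (2*(s-j)+1) = 2*s+2 := by omega
      rw [← add_mul, h5]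
    rw [Finset.sum_congr rfl h4, ← Finset.mul_sum, ih s (Nat.lt_succ_self s),
      phi_succ (s+1)]
    ring

lemma S_succ (m : ℕ → ℕ) (hm0 : m 0 = 1)
    (hm : ∀ n : ℕ, m (n + 1) =
      (∑ k ∈ Finset.range (n + 1), m k * m (n - k)) + (2 * (n + 1) - 1) * m n)
    (e : ℕ → Polynomial ℝ) (he0 : e 0 = 1)
    (he : ∀ n : ℕ, e (n + 1) =
      C (2 * ((n : ℝ) + 1) - 1) * X * e n +
        X * ∑ i ∈ Finset.range (n + 1), C ((m i : ℝ)) * e (n - i)) (n : ℕ) :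
    (∑ j ∈ Finset.range (n+2), C ((phi j : ℝ)) * e (n+1-j))
  = C (2*((n:ℝ)+1)) * X * (∑ j ∈ Finset.range (n+1), C ((phi j : ℝ)) * e (n-j))
      + C ((phi (n+1) : ℝ)) := by
  rw [Finset.sum_range_succ, Nat.sub_self, he0, mul_one]
  congr 1
  have step : ∀ j ∈ Finset.range (n+1), C ((phi j : ℝ)) * e (n+1-j)
      = C ((phi j : ℝ)) * ∑ i ∈ Finset.range (n-j+1), (X * C ((m i : ℝ))) * e (n-j-i)
        + (C ((phi j : ℝ) * (2*(((n-j : ℕ)) : ℝ)+1)) * X) * e (n-j) := by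
    intro j hj
    have hj' : j ≤ n := Nat.lt_succ_iff.mp (Finset.mem_range.mp hj)
    have h1 : n + 1 - j = (n - j) + 1 := by omega
    rw [h1, he (n-j)]
    have h2 : (2 : ℝ) * (((n-j:ℕ):ℝ) + 1) - 1 = 2*((n-j:ℕ):ℝ)+1 := by ring
    rw [h2]
    have h3 : ∑ i ∈ Finset.range (n-j+1), (X * C ((m i : ℝ))) * e (n-j-i)
        = X * ∑ i ∈ Finset.range (n-j+1), C ((m i : ℝ)) * e (n-j-i) := by
      rw [Finset.mul_sum]
      exact Finset.sum_congr rfl (fun i _ => by ring)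
    rw [h3, map_mul]
    ring
  rw [Finset.sum_congr rfl step, Finset.sum_add_distrib]
  have hconv := conv_assoc (fun j => C ((phi j : ℝ))) (fun i => X * C ((m i : ℝ))) e n
  rw [hconv]
  have hinner : ∀ k ∈ Finset.range (n+1),
      (∑ j ∈ Finset.range (k+1), C ((phi j : ℝ)) * (X * C ((m (k-j) : ℝ)))) * e (n-k)
      = (C ((phi (k+1) : ℝ)) * X) * e (n-k) := by
    intro k hk
    congr 1
    have h4 : ∀ j ∈ Finset.range (k+1),
        C ((phi j : ℝ)) * (X * C ((m (k-j) : ℝ)))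
        = C (((phi j * m (k-j) : ℕ) : ℝ)) * X := by
      intro j hj
      push_cast
      rw [map_mul]
      ring
    rw [Finset.sum_congr rfl h4, ← Finset.sum_mul, ← map_sum]
    congr 2
    push_cast [← conv_phi_m m hm0 hm k]
    rfl
  rw [Finset.sum_congr rfl hinner, ← Finset.sum_add_distrib]
  have hcomb : ∀ k ∈ Finset.range (n+1),
      (C ((phi (k+1) : ℝ)) * X) * e (n-k)
        + (C ((phi k : ℝ) * (2*(((n-k : ℕ)) : ℝ)+1)) * X) * e (n-k)
      = (C (2*((n:ℝ)+1)) * X) * (C ((phi k : ℝ)) * e (n-k)) := by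
    intro k hk
    have hk' : k ≤ n := Nat.lt_succ_iff.mp (Finset.mem_range.mp hk)
    have hc : ((phi (k+1) : ℝ)) + (phi k : ℝ) * (2*(((n-k : ℕ)) : ℝ)+1)
        = (2*((n:ℝ)+1)) * (phi k : ℝ) := by
      rw [phi_succ]
      push_cast [Nat.cast_sub hk']
      ring
    rw [← add_mul, ← add_mul, ← map_add, hc, map_mul]
    ring
  rw [Finset.sum_congr rfl hcomb, ← Finset.mul_sum]

lemma R_succ (n : ℕ) :
    C ((2:ℝ)^(n+1) * (((n+1).factorial : ℕ) : ℝ)) *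
      ∑ j ∈ Finset.range (n+2), C (((2*j).choose j : ℝ)/4^j) * X^(n+1-j)
  = C (2*((n:ℝ)+1)) * X *
      (C ((2:ℝ)^n * ((n.factorial : ℕ) : ℝ)) *
        ∑ j ∈ Finset.range (n+1), C (((2*j).choose j : ℝ)/4^j) * X^(n-j))
    + C ((phi (n+1):ℝ)) := by
  have hphi : (phi (n+1) : ℝ) * ((2:ℝ)^(n+1) * (((n+1).factorial:ℕ):ℝ))
      = (((2*(n+1)).factorial : ℕ) : ℝ) := by
    have h := phiAux_spec (n+1)
    rw [← phi_eq] at h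
    exact_mod_cast congrArg (fun x : ℕ => (x : ℝ)) h.symm
  have hch : (((2*(n+1)).choose (n+1) : ℕ) : ℝ) * (((n+1).factorial:ℕ):ℝ)
        * (((n+1).factorial:ℕ):ℝ) = (((2*(n+1)).factorial : ℕ) : ℝ) := by
    have h := Nat.choose_mul_factorial_mul_factorial (show n+1 ≤ 2*(n+1) by omega)
    have h2 : 2*(n+1) - (n+1) = n+1 := by omega
    rw [h2] at h
    exact_mod_cast congrArg (fun x : ℕ => (x : ℝ)) h
  have hf : (((n+1).factorial:ℕ):ℝ) ≠ 0 := by positivity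
  have h5 : (phi (n+1) : ℝ) * (2:ℝ)^(n+1)
      = (((2*(n+1)).choose (n+1) : ℕ) : ℝ) * (((n+1).factorial:ℕ):ℝ) := by
    apply mul_right_cancel₀ hf
    linear_combination hphi - hch
  have key : ((2:ℝ)^(n+1) * (((n+1).factorial : ℕ) : ℝ)) *
      (((2*(n+1)).choose (n+1) : ℝ)/4^(n+1)) = (phi (n+1) : ℝ) := by
    have h4 : (4:ℝ)^(n+1) = 2^(n+1) * 2^(n+1) := by
      rw [← mul_pow]; norm_num
    rw [h4, div_eq_mul_inv]
    have h2 : ((2:ℝ)^(n+1)) ≠ 0 := by positivity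
    field_simp
    linear_combination -h5
  have hstep : ∀ j ∈ Finset.range (n+1),
      C (((2*j).choose j : ℝ)/4^j) * X^(n+1-j)
      = X * (C (((2*j).choose j : ℝ)/4^j) * X^(n-j)) := by
    intro j hj
    have hj' : j ≤ n := Nat.lt_succ_iff.mp (Finset.mem_range.mp hj)
    have h1 : n + 1 - j = (n - j) + 1 := by omega
    rw [h1, pow_succ]
    ring
  rw [Finset.sum_range_succ, Finset.sum_congr rfl hstep, ← Finset.mul_sum,
    Nat.sub_self, pow_zero, mul_one, mul_add, ← map_mul, key]
  congr 1
  have h2 : (2:ℝ)^(n+1) * (((n+1).factorial:ℕ):ℝ)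
      = (2*((n:ℝ)+1)) * ((2:ℝ)^n * ((n.factorial:ℕ):ℝ)) := by
    push_cast [Nat.factorial_succ, pow_succ]
    ring
  rw [h2, map_mul]
  ring


/-- For every `n ≥ 0` the polynomial identity
`Σ_{j=0}^{n} φ(j)·e_{n−j}(v) = 2^n · n! · Σ_{j=0}^{n} binom(2j,j)·4^{−j}·v^{n−j}`
holds in `ℝ[v]`. -/
theorem root_edges_convolution_identity
    (m : ℕ → ℕ) (hm0 : m 0 = 1)
    (hm : ∀ n : ℕ, m (n + 1) =
      (∑ k ∈ Finset.range (n + 1), m k * m (n - k)) + (2 * (n + 1) - 1) * m n)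
    (e : ℕ → Polynomial ℝ) (he0 : e 0 = 1)
    (he : ∀ n : ℕ, e (n + 1) =
      C (2 * ((n : ℝ) + 1) - 1) * X * e n +
        X * ∑ i ∈ Finset.range (n + 1), C ((m i : ℝ)) * e (n - i)) :
    ∀ n : ℕ,
      (∑ j ∈ Finset.range (n + 1), C ((phi j : ℝ)) * e (n - j)) =
        C ((2 : ℝ) ^ n * (n.factorial : ℝ)) *
          ∑ j ∈ Finset.range (n + 1),
            C (((2 * j).choose j : ℝ) / 4 ^ j) * X ^ (n - j) := by
  intro n
  induction n with
  | zero => simp [phi_zero, he0]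
  | succ n ih =>
    show (∑ j ∈ Finset.range (n+2), C ((phi j : ℝ)) * e (n+1-j))
        = C ((2:ℝ)^(n+1) * (((n+1).factorial : ℕ) : ℝ)) *
          ∑ j ∈ Finset.range (n+2), C (((2*j).choose j : ℝ)/4^j) * X^(n+1-j)
    rw [S_succ m hm0 hm e he0 he n, ih, R_succ n]
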